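/- Let D be a strongly connected digraph of order n = 2r+1 with radius r >= 5/2 (so n >= 6). Then the number of arcs of D satisfies |A(D)| <= (2r+1)(r+1) - 1. -/

import Mathlib

variable {V : Type*}

/-- `ReachWithin A k u v` means the directed distance from `u` to `v` is at most `k`. -/
def ReachWithin (A : V → V → Prop) : ℕ → V → V → Prop
  | 0, u, v => u = v
  | k+1, u, v => u = v ∨ ∃ w, A u w ∧ ReachWithin A k w v

/-- out-eccentricity of `v` is at most `r`. -/
def outEccLe (A : V → V → Prop) (r : ℕ) (v : V) : Prop :=
  ∀ u, ReachWithin A r v u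

/-- in-eccentricity of `v` is at most `r`. -/
def inEccLe (A : V → V → Prop) (r : ℕ) (v : V) : Prop :=
  ∀ u, ReachWithin A r u v

/-- The out-radius of the digraph `A` equals `r`. -/
def outRadiusIs (A : V → V → Prop) (r : ℕ) : Prop :=
  (∃ v, outEccLe A r v) ∧ ∀ v, ¬ outEccLe A (r - 1) v

/-- A digraph is strongly connected (biconnected) if every vertex reaches every other. -/
def StronglyConnected (A : V → V → Prop) : Prop :=
  ∀ u v, ∃ k, ReachWithin A k u v

/-- Number of arcs of the digraph. -/
noncomputable def arcCard (A : V → V → Prop) : ℕ :=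
  {p : V × V | A p.1 p.2}.ncard

noncomputable def outDeg (A : V → V → Prop) (v : V) : ℕ :=
  {w | A v w}.ncard

noncomputable def inDeg (A : V → V → Prop) (v : V) : ℕ :=
  {w | A w v}.ncard

noncomputable def totalDeg (A : V → V → Prop) (v : V) : ℕ :=
  outDeg A v + inDeg A v

/-- The directed distance from `u` to `v` equals `k`. -/
def DistEq (A : V → V → Prop) (k : ℕ) (u v : V) : Prop :=
  ReachWithin A k u v ∧ ∀ j < k, ¬ ReachWithin A j u v

/-- out-eccentricity as a natural number. -/
noncomputable def outEcc (A : V → V → Prop) (v : V) : ℕ :=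
  sInf {k | outEccLe A k v}

/-- in-eccentricity as a natural number. -/
noncomputable def inEcc (A : V → V → Prop) (v : V) : ℕ :=
  sInf {k | inEccLe A k v}

/-- `P` is a bipartition of the digraph `A`: every arc joins the two classes. -/
def Bipartition (A : V → V → Prop) (P : V → Prop) : Prop :=
  ∀ u v, A u v → (P u ↔ ¬ P v)

lemma reach_refl (A : V → V → Prop) : ∀ k (v : V), ReachWithin A k v v
  | 0, _ => rfl
  | k+1, v => Or.inl rfl

lemma reach_mono {A : V → V → Prop} :
    ∀ {j k : ℕ} {u v : V}, ReachWithin A j u v → j ≤ k → ReachWithin A k u v := by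
  intro j
  induction j with
  | zero => intro k u v h _; cases h; exact reach_refl A k u
  | succ m ih =>
    intro k u v h hk
    obtain ⟨k', rfl⟩ : ∃ k', k = k' + 1 := ⟨k - 1, by omega⟩
    rcases h with rfl | ⟨w, haw, hr⟩
    · exact Or.inl rfl
    · exact Or.inr ⟨w, haw, ih hr (by omega)⟩

lemma reach_snoc_iff {A : V → V → Prop} :
    ∀ {k : ℕ} {u v : V}, ReachWithin A (k+1) u v ↔ u = v ∨ ∃ w, ReachWithin A k u w ∧ A w v := by
  intro k
  induction k with
  | zero =>
    intro u v
    constructor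
    · rintro (rfl | ⟨w, haw, rfl⟩)
      · exact Or.inl rfl
      · exact Or.inr ⟨u, rfl, haw⟩
    · rintro (rfl | ⟨w, rfl, hwv⟩)
      · exact Or.inl rfl
      · exact Or.inr ⟨v, hwv, rfl⟩
  | succ m ih =>
    intro u v
    constructor
    · rintro (rfl | ⟨x, hux, hr⟩)
      · exact Or.inl rfl
      · rcases ih.mp hr with rfl | ⟨w, hrw, hwv⟩
        · exact Or.inr ⟨u, reach_refl A _ u, hux⟩
        · exact Or.inr ⟨w, Or.inr ⟨x, hux, hrw⟩, hwv⟩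
    · rintro (rfl | ⟨w, (rfl | ⟨x, hux, hrw⟩), hwv⟩)
      · exact Or.inl rfl
      · exact Or.inr ⟨v, hwv, reach_refl A _ v⟩
      · exact Or.inr ⟨x, hux, ih.mpr (Or.inr ⟨w, hrw, hwv⟩)⟩

lemma reach_flip {A : V → V → Prop} :
    ∀ {k : ℕ} {u v : V}, ReachWithin (fun a b => A b a) k u v ↔ ReachWithin A k v u := by
  intro k
  induction k with
  | zero => intro u v; exact eq_comm
  | succ m ih =>
    intro u v
    rw [show (ReachWithin (fun a b => A b a) (m+1) u v) =
      (u = v ∨ ∃ w, A w u ∧ ReachWithin (fun a b => A b a) m w v) from rfl, reach_snoc_iff]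
    constructor
    · rintro (rfl | ⟨w, hwu, hr⟩)
      · exact Or.inl rfl
      · exact Or.inr ⟨w, ih.mp hr, hwu⟩
    · rintro (rfl | ⟨w, hr, hwu⟩)
      · exact Or.inl rfl
      · exact Or.inr ⟨w, hwu, ih.mpr hr⟩

noncomputable def dDist (A : V → V → Prop) (u v : V) : ℕ := sInf {k | ReachWithin A k u v}

lemma dDist_le {A : V → V → Prop} {k : ℕ} {u v : V} (h : ReachWithin A k u v) : dDist A u v ≤ k :=
  Nat.sInf_le h

lemma dDist_self (A : V → V → Prop) (u : V) : dDist A u u = 0 :=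
  Nat.le_zero.mp (Nat.sInf_le (reach_refl A 0 u))

section dist
variable {A : V → V → Prop} (hSC : StronglyConnected A)
include hSC

lemma reach_dDist (u v : V) : ReachWithin A (dDist A u v) u v :=
  Nat.sInf_mem (hSC u v)

lemma dDist_le_iff {k : ℕ} {u v : V} : dDist A u v ≤ k ↔ ReachWithin A k u v :=
  ⟨fun h => reach_mono (reach_dDist hSC u v) h, dDist_le⟩

lemma dDist_triangle_arc {v w z : V} (h : A w z) : dDist A v z ≤ dDist A v w + 1 :=
  dDist_le (reach_snoc_iff.mpr (Or.inr ⟨w, reach_dDist hSC v w, h⟩))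

lemma dDist_eq_zero {u v : V} (h : dDist A u v = 0) : u = v := by
  have := reach_dDist hSC u v
  rw [h] at this; exact this

lemma dDist_eq_one_iff (hirr : Irreflexive A) {v w : V} : dDist A v w = 1 ↔ A v w := by
  constructor
  · intro h
    have h1 : ReachWithin A 1 v w := by rw [← h]; exact reach_dDist hSC v w
    rcases h1 with rfl | ⟨x, hx, rfl⟩
    · have := dDist_self A v; omega
    · exact hx
  · intro h
    have h1 : dDist A v w ≤ 1 := dDist_le (Or.inr ⟨w, h, rfl⟩)
    have h0 : dDist A v w ≠ 0 := fun h0 => hirr v ((dDist_eq_zero hSC h0) ▸ h)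
    omega

lemma dDist_descend {v : V} :
    ∀ (k : ℕ) (u : V), dDist A v u = k → ∀ j, j ≤ k → ∃ w, dDist A v w = j := by
  intro k
  induction k with
  | zero => intro u h j hj; exact ⟨u, by omega⟩
  | succ m ih =>
    intro u h j hj
    rcases Nat.eq_or_lt_of_le hj with rfl | hlt
    · exact ⟨u, h⟩
    · have hr : ReachWithin A (m+1) v u := by rw [← h]; exact reach_dDist hSC v u
      rcases reach_snoc_iff.mp hr with rfl | ⟨w, hw, haw⟩
      · have := dDist_self A v; omega
      · have hdw : dDist A v w = m := by
          have h1 : dDist A v w ≤ m := dDist_le hw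
          by_contra hne
          have h3 : ReachWithin A (dDist A v w + 1) v u :=
            reach_snoc_iff.mpr (Or.inr ⟨w, reach_dDist hSC v w, haw⟩)
          have h4 := dDist_le h3
          omega
        exact ih w hdw j (by omega)

end dist

section ecc
variable [Fintype V] {A : V → V → Prop} (hSC : StronglyConnected A)
include hSC

lemma exists_outEccLe (v : V) : ∃ K, outEccLe A K v := by
  refine ⟨∑ u : V, dDist A v u, fun u => ?_⟩
  exact reach_mono (reach_dDist hSC v u)
    (Finset.single_le_sum (f := fun u => dDist A v u) (fun _ _ => Nat.zero_le _) (Finset.mem_univ u))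

lemma outEccLe_outEcc (v : V) : outEccLe A (outEcc A v) v :=
  Nat.sInf_mem (exists_outEccLe hSC v)

omit hSC in omit [Fintype V] in
lemma outEcc_le {k : ℕ} {v : V} (h : outEccLe A k v) : outEcc A v ≤ k := Nat.sInf_le h

lemma dDist_le_outEcc (v u : V) : dDist A v u ≤ outEcc A v :=
  dDist_le (outEccLe_outEcc hSC v u)

lemma exists_dDist_eq {v : V} {j : ℕ} (hj : j ≤ outEcc A v) : ∃ w, dDist A v w = j := by
  obtain ⟨u, hu⟩ : ∃ u, dDist A v u = outEcc A v := by
    by_contra h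
    push_neg at h
    rcases Nat.eq_zero_or_pos (outEcc A v) with h0 | h0
    · exact h v (by rw [dDist_self A, h0])
    · have hle : outEccLe A (outEcc A v - 1) v := fun u => by
        have h1 := dDist_le_outEcc hSC v u
        have h2 := h u
        exact reach_mono (reach_dDist hSC v u) (by omega)
      have := outEcc_le hle
      omega
  exact dDist_descend hSC _ u hu j (by omega)

end ecc

open Finset in
lemma ncard_setOf_eq [Fintype V] (P : V → Prop) [DecidablePred P] :
    {w | P w}.ncard = (Finset.univ.filter P).card := by
  rw [Set.ncard_eq_toFinset_card', Set.toFinset_setOf]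

open Finset in
lemma arcCard_eq_sum_outDeg [Fintype V] (A : V → V → Prop) :
    arcCard A = ∑ v : V, outDeg A v := by
  classical
  rw [arcCard, ncard_setOf_eq]
  rw [Finset.card_eq_sum_card_fiberwise (f := Prod.fst) (t := Finset.univ)
    (fun x _ => Finset.mem_univ x.1)]
  refine Finset.sum_congr rfl fun v _ => ?_
  rw [outDeg, ncard_setOf_eq]
  refine Finset.card_bij (fun p _ => p.2) ?_ ?_ ?_
  · intro p hp
    simp only [Finset.mem_filter, Finset.mem_univ, true_and] at hp ⊢
    rcases hp with ⟨h1, h2⟩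
    rwa [h2] at h1
  · intro p hp q hq h
    simp only [Finset.mem_filter, Finset.mem_univ, true_and] at hp hq
    exact Prod.ext (hp.2.trans hq.2.symm) h
  · intro w hw
    simp only [Finset.mem_filter, Finset.mem_univ, true_and] at hw
    exact ⟨(v, w), by simp [hw], rfl⟩

lemma arcCard_flip [Fintype V] (A : V → V → Prop) :
    arcCard (fun a b => A b a) = arcCard A := by
  have himg : {p : V × V | A p.2 p.1} = Prod.swap '' {p : V × V | A p.1 p.2} := by
    ext ⟨a, b⟩
    simp only [Set.mem_setOf_eq, Set.mem_image, Prod.exists, Prod.swap_prod_mk, Prod.mk.injEq]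
    constructor
    · intro h; exact ⟨b, a, h, rfl, rfl⟩
    · rintro ⟨x, y, h, rfl, rfl⟩; exact h
  show {p : V × V | A p.2 p.1}.ncard = _
  rw [himg, Set.ncard_image_of_injective _ Prod.swap_injective]
  rfl

lemma outDeg_flip (A : V → V → Prop) (v : V) : outDeg (fun a b => A b a) v = inDeg A v := rfl
lemma inDeg_flip (A : V → V → Prop) (v : V) : inDeg (fun a b => A b a) v = outDeg A v := rfl

lemma outEcc_flip (A : V → V → Prop) (v : V) : outEcc (fun a b => A b a) v = inEcc A v := by
  unfold outEcc inEcc outEccLe inEccLe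
  congr 1
  ext k
  exact forall_congr' fun u => reach_flip

lemma inEcc_flip (A : V → V → Prop) (v : V) : inEcc (fun a b => A b a) v = outEcc A v := by
  unfold outEcc inEcc outEccLe inEccLe
  congr 1
  ext k
  exact forall_congr' fun u => reach_flip

lemma sc_flip {A : V → V → Prop} (hSC : StronglyConnected A) :
    StronglyConnected (fun a b => A b a) := by
  intro u v
  obtain ⟨k, hk⟩ := hSC v u
  exact ⟨k, reach_flip.mpr hk⟩

lemma irr_flip {A : V → V → Prop} (hirr : Irreflexive A) :
    Irreflexive (fun a b => A b a) := fun x h => hirr x h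

lemma arcCard_eq_sum_inDeg [Fintype V] (A : V → V → Prop) :
    arcCard A = ∑ v : V, inDeg A v := by
  rw [← arcCard_flip A, arcCard_eq_sum_outDeg]
  exact Finset.sum_congr rfl fun v _ => outDeg_flip A v

section levels
variable [Fintype V] {A : V → V → Prop} (hirr : Irreflexive A) (hSC : StronglyConnected A)

/-- fiber cardinality -/
noncomputable def fib (A : V → V → Prop) [Fintype V] (v : V) (j : ℕ) : ℕ :=
  (Finset.univ.filter fun w => dDist A v w = j).card

include hSC in
lemma fib_sum (v : V) :
    ∑ j ∈ Finset.range (outEcc A v + 1), fib A v j = Fintype.card V := by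
  rw [← Finset.card_univ]
  exact (Finset.card_eq_sum_card_fiberwise (f := fun w => dDist A v w)
    (t := Finset.range (outEcc A v + 1))
    (fun w _ => Finset.mem_range.mpr (Nat.lt_succ_of_le (dDist_le_outEcc hSC v w)))).symm

include hSC in
lemma fib_pos {v : V} {j : ℕ} (hj : j ≤ outEcc A v) : 1 ≤ fib A v j := by
  obtain ⟨w, hw⟩ := exists_dDist_eq hSC hj
  exact Finset.card_pos.mpr ⟨w, Finset.mem_filter.mpr ⟨Finset.mem_univ w, hw⟩⟩

include hSC in
lemma fib_zero (v : V) : fib A v 0 = 1 := by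
  show (Finset.univ.filter fun w => dDist A v w = 0).card = 1
  rw [Finset.card_eq_one]
  refine ⟨v, ?_⟩
  ext w
  simp only [Finset.mem_filter, Finset.mem_univ, true_and, Finset.mem_singleton]
  constructor
  · intro h; exact (dDist_eq_zero hSC h).symm
  · intro h; rw [h]; exact dDist_self A v

include hirr hSC in
lemma fib_one (v : V) : fib A v 1 = outDeg A v := by
  classical
  show (Finset.univ.filter fun w => dDist A v w = 1).card = ({w | A v w}).ncard
  rw [ncard_setOf_eq]
  congr 1
  ext w
  simp only [Finset.mem_filter, Finset.mem_univ, true_and]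
  exact dDist_eq_one_iff hSC hirr

omit hirr hSC in
lemma outDeg_succ_le (hirr : Irreflexive A) (v : V) :
    outDeg A v + 1 ≤ Fintype.card V := by
  have hni : v ∉ {w | A v w} := fun h => hirr v h
  have h1 : ({w | A v w} ∪ {v}).ncard = {w | A v w}.ncard + 1 := by
    rw [Set.union_singleton, Set.ncard_insert_of_notMem hni (Set.toFinite _)]
  have h2 : ({w | A v w} ∪ {v}).ncard ≤ Fintype.card V := by
    have h3 := Set.ncard_le_ncard (Set.subset_univ ({w | A v w} ∪ {v})) Set.finite_univ
    rwa [Set.ncard_univ, Nat.card_eq_fintype_card] at h3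
  show {w | A v w}.ncard + 1 ≤ Fintype.card V
  omega

include hirr hSC in
lemma outDeg_add_outEcc_le (v : V) :
    outDeg A v + outEcc A v ≤ Fintype.card V := by
  set s := outEcc A v with hs
  rcases Nat.eq_zero_or_pos s with h0 | h0
  · rw [h0]
    have := outDeg_succ_le hirr v
    omega
  · have hsum := fib_sum hSC v
    rw [Finset.range_eq_Ico, ← Finset.sum_Ico_consecutive _ (by omega : 0 ≤ 2) (by omega : 2 ≤ s + 1)]
      at hsum
    have hlow : ∑ j ∈ Finset.Ico 0 2, fib A v j = 1 + outDeg A v := by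
      rw [← Finset.range_eq_Ico]
      rw [Finset.sum_range_succ, Finset.sum_range_succ, Finset.sum_range_zero]
      rw [fib_zero hSC, fib_one hirr hSC]
    have hhi : (Finset.Ico 2 (s + 1)).card • 1 ≤ ∑ j ∈ Finset.Ico 2 (s + 1), fib A v j :=
      Finset.card_nsmul_le_sum _ _ _ (fun j hj => fib_pos hSC (by
        rw [Finset.mem_Ico] at hj; omega))
    rw [Nat.card_Ico, smul_eq_mul, mul_one] at hhi
    omega

include hirr hSC in
lemma fib_eq_one {v : V} (heq : outDeg A v + outEcc A v = Fintype.card V)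
    {j : ℕ} (h2 : 2 ≤ j) (hjs : j ≤ outEcc A v) : fib A v j = 1 := by
  set s := outEcc A v with hs
  have hsum := fib_sum hSC v
  rw [Finset.range_eq_Ico, ← Finset.sum_Ico_consecutive _ (by omega : 0 ≤ 2) (by omega : 2 ≤ s + 1)]
    at hsum
  have hlow : ∑ j ∈ Finset.Ico 0 2, fib A v j = 1 + outDeg A v := by
    rw [← Finset.range_eq_Ico]
    rw [Finset.sum_range_succ, Finset.sum_range_succ, Finset.sum_range_zero]
    rw [fib_zero hSC, fib_one hirr hSC]
  have hcard : ∑ j ∈ Finset.Ico 2 (s + 1), fib A v j = (Finset.Ico 2 (s + 1)).card := by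
    rw [Nat.card_Ico]
    omega
  by_contra hne
  have hgt : 1 < fib A v j := by
    have := fib_pos hSC hjs
    omega
  have : ∑ j ∈ Finset.Ico 2 (s + 1), (1 : ℕ) < ∑ j ∈ Finset.Ico 2 (s + 1), fib A v j := by
    refine Finset.sum_lt_sum (fun i hi => fib_pos hSC (by rw [Finset.mem_Ico] at hi; omega)) ?_
    exact ⟨j, Finset.mem_Ico.mpr ⟨h2, by omega⟩, hgt⟩
  rw [Finset.sum_const, smul_eq_mul, mul_one] at this
  omega

include hirr hSC in
lemma kernel {R : ℕ} (hR : 5 ≤ R) (hn : Fintype.card V = R + 1)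
    (H : ∀ w : V, outDeg A w + outEcc A w = R + 1 ∧ inDeg A w + inEcc A w = R + 1 ∧
      outEcc A w + inEcc A w = R)
    (v : V) (hv : 3 ≤ outEcc A v) : False := by
  set s := outEcc A v with hs
  obtain ⟨z, hz⟩ := exists_dDist_eq hSC (le_refl s)
  have heqv : outDeg A v + outEcc A v = Fintype.card V := by
    have := (H v).1; omega
  have hfs : fib A v s = 1 := fib_eq_one hirr hSC heqv (by omega) (le_refl s)
  have hfs1 : fib A v (s - 1) = 1 := fib_eq_one hirr hSC heqv (by omega) (by omega)
  obtain ⟨u, hu⟩ := Finset.card_eq_one.mp hfs1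
  -- all in-neighbors of z equal u
  have hsub : {w | A w z} ⊆ {u} := by
    intro w hw
    have htri : dDist A v z ≤ dDist A v w + 1 := dDist_triangle_arc hSC hw
    have hle : dDist A v w ≤ s := dDist_le_outEcc hSC v w
    have hne : dDist A v w ≠ s := by
      intro he
      have hwz : w = z := by
        have h1 : w ∈ Finset.univ.filter fun x => dDist A v x = s :=
          Finset.mem_filter.mpr ⟨Finset.mem_univ w, he⟩
        have h2 : z ∈ Finset.univ.filter fun x => dDist A v x = s :=
          Finset.mem_filter.mpr ⟨Finset.mem_univ z, hz⟩
        exact Finset.card_le_one.mp (le_of_eq hfs) w h1 z h2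
      exact hirr z (hwz ▸ hw)
    have hd : dDist A v w = s - 1 := by omega
    have : w ∈ Finset.univ.filter fun x => dDist A v x = s - 1 :=
      Finset.mem_filter.mpr ⟨Finset.mem_univ w, hd⟩
    rw [hu, Finset.mem_singleton] at this
    exact this
  have hinz : inDeg A z ≤ 1 := by
    have := Set.ncard_le_ncard hsub (Set.finite_singleton u)
    rw [Set.ncard_singleton] at this; exact this
  obtain ⟨h1z, h2z, h3z⟩ := H z
  -- inEcc z ≥ R, so outEcc z = 0, outDeg z = R+1 = card V, contradiction
  have houtz : outDeg A z + 1 ≤ Fintype.card V := outDeg_succ_le hirr z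
  omega

end levels


/-- A strongly connected digraph of order `n = 2r+1` with radius `r ≥ 5/2` has at most
`(2r+1)(r+1) - 1` arcs. Here `R = 2r` (twice the, possibly half-integral, radius), so the
bound reads `2|A| ≤ (R+1)(R+2) - 2`. -/
theorem stmt5 [Fintype V] (A : V → V → Prop) (hirr : Irreflexive A)
    (hSC : StronglyConnected A) (R : ℕ) (hR : 5 ≤ R)
    (hn : Fintype.card V = R + 1)
    (hradLB : ∀ x : V, R ≤ outEcc A x + inEcc A x)
    (hradEq : ∃ x : V, outEcc A x + inEcc A x = R) :
    2 * arcCard A ≤ (R + 1) * (R + 2) - 2 := by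
  classical
  by_contra hcon
  push_neg at hcon
  have hsum2 : 2 * arcCard A = ∑ v : V, totalDeg A v := by
    rw [two_mul]
    nth_rewrite 1 [arcCard_eq_sum_outDeg]
    rw [arcCard_eq_sum_inDeg, ← Finset.sum_add_distrib]
    rfl
  have hin_le : ∀ v : V, inDeg A v + inEcc A v ≤ Fintype.card V := by
    intro v
    have h := outDeg_add_outEcc_le (irr_flip hirr) (sc_flip hSC) v
    rwa [outDeg_flip, outEcc_flip] at h
  have hub : ∀ v : V, totalDeg A v ≤ R + 2 := by
    intro v
    have h1 := outDeg_add_outEcc_le hirr hSC v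
    have h2 := hin_le v
    have h3 := hradLB v
    rw [hn] at h1 h2
    show outDeg A v + inDeg A v ≤ R + 2
    omega
  have hle : ∑ v : V, totalDeg A v ≤ (R + 1) * (R + 2) := by
    calc ∑ v : V, totalDeg A v ≤ Finset.univ.card • (R + 2) :=
          Finset.sum_le_card_nsmul _ _ _ (fun v _ => hub v)
    _ = (R + 1) * (R + 2) := by rw [Finset.card_univ, hn, smul_eq_mul]
  obtain ⟨m, hm⟩ : Even ((R + 1) * (R + 2)) := Nat.even_mul_succ_self (R + 1)
  set P := (R + 1) * (R + 2) with hP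
  have heq : ∑ v : V, totalDeg A v = P := by omega
  have hall : ∀ v : V, totalDeg A v = R + 2 := by
    intro v
    by_contra hv
    have hlt : totalDeg A v < R + 2 := lt_of_le_of_ne (hub v) hv
    have hstrict : ∑ w : V, totalDeg A w < ∑ _w : V, (R + 2) :=
      Finset.sum_lt_sum (fun i _ => hub i) ⟨v, Finset.mem_univ v, hlt⟩
    rw [Finset.sum_const, Finset.card_univ, hn, smul_eq_mul, ← hP] at hstrict
    omega
  have H : ∀ w : V, outDeg A w + outEcc A w = R + 1 ∧ inDeg A w + inEcc A w = R + 1 ∧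
      outEcc A w + inEcc A w = R := by
    intro w
    have h1 := outDeg_add_outEcc_le hirr hSC w
    have h2 := hin_le w
    have h3 := hradLB w
    have h4 : outDeg A w + inDeg A w = R + 2 := hall w
    rw [hn] at h1 h2
    refine ⟨by omega, by omega, by omega⟩
  obtain ⟨x, hx⟩ := hradEq
  rcases le_or_gt 3 (outEcc A x) with h3 | h3
  · exact kernel hirr hSC hR hn H x h3
  · have h3' : 3 ≤ inEcc A x := by omega
    have Hf : ∀ w : V, outDeg (fun a b => A b a) w + outEcc (fun a b => A b a) w = R + 1 ∧
        inDeg (fun a b => A b a) w + inEcc (fun a b => A b a) w = R + 1 ∧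
        outEcc (fun a b => A b a) w + inEcc (fun a b => A b a) w = R := by
      intro w
      obtain ⟨a, b, c⟩ := H w
      have e1 : outEcc (fun a b => A b a) w = inEcc A w := outEcc_flip A w
      have e2 : inEcc (fun a b => A b a) w = outEcc A w := inEcc_flip A w
      have e3 : outDeg (fun a b => A b a) w = inDeg A w := rfl
      have e4 : inDeg (fun a b => A b a) w = outDeg A w := rfl
      refine ⟨?_, ?_, ?_⟩
      · rw [e3, e1]; exact b
      · rw [e4, e2]; exact a
      · rw [e1, e2]; omega
    exact kernel (irr_flip hirr) (sc_flip hSC) hR hn Hf x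
      (by rw [outEcc_flip]; exact h3')
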